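/- Consider the polynomial system F over reals in variables (X₂₂, X₂₃, Y₁, Y₂): Y₁ − X₂₂/2 + 1/2 = 0; X₂₃ + X₂₂Y₂ = 0; X₂₃Y₂ − Y₁(X₂₂/2 − 1/2) = 0. Then (X₂₂, X₂₃, Y₁, Y₂) = (1, 0, 0, 0) is a solution, and it is an isolated real solution: there is an open neighborhood of (1,0,0,0) in ℝ⁴ containing no other real solution of F. -/
import Mathlib


/-- The real solution set of the polynomial system `F` in variables
`(X₂₂, X₂₃, Y₁, Y₂)`:
`Y₁ − X₂₂/2 + 1/2 = 0`, `X₂₃ + X₂₂·Y₂ = 0`, `X₂₃·Y₂ − Y₁·(X₂₂/2 − 1/2) = 0`. -/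
def Fsys : Set (ℝ × ℝ × ℝ × ℝ) :=
  {p | p.2.2.1 - p.1 / 2 + 1 / 2 = 0 ∧
       p.2.1 + p.1 * p.2.2.2 = 0 ∧
       p.2.1 * p.2.2.2 - p.2.2.1 * (p.1 / 2 - 1 / 2) = 0}

/-- `(1, 0, 0, 0)` is a solution of the system `F`, and it is an isolated real
solution: some open neighborhood of it contains no other real solution. -/
theorem stmt19 :
    ((1 : ℝ), (0 : ℝ), (0 : ℝ), (0 : ℝ)) ∈ Fsys ∧
      ∃ U : Set (ℝ × ℝ × ℝ × ℝ), IsOpen U ∧ ((1 : ℝ), (0 : ℝ), (0 : ℝ), (0 : ℝ)) ∈ U ∧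
        ∀ p ∈ U ∩ Fsys, p = ((1 : ℝ), (0 : ℝ), (0 : ℝ), (0 : ℝ)) := by
  constructor
  · refine ⟨by norm_num, by norm_num, by norm_num⟩
  · refine ⟨{p | 0 < p.1}, isOpen_lt continuous_const continuous_fst, by norm_num, ?_⟩
    rintro ⟨a, b, c, d⟩ ⟨ha, h1, h2, h3⟩
    simp only [Set.mem_setOf_eq] at ha h1 h2 h3
    have hb' : b = -(a * d) := by linarith
    have h2d : b * d + a * d ^ 2 = 0 := by rw [hb']; ring
    have key : a * d ^ 2 = 0 := by nlinarith [sq_nonneg c, mul_nonneg ha.le (sq_nonneg d), h2d]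
    have hd : d = 0 := by
      rcases mul_eq_zero.1 key with h | h
      · linarith
      · exact pow_eq_zero_iff two_ne_zero |>.1 h
    have hc : c = 0 := by nlinarith [sq_nonneg c]
    have ha1 : a = 1 := by linarith
    have hb : b = 0 := by nlinarith
    simp [ha1, hb, hc, hd]
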